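/- Let S, a be as above with L_b := (S + b) \ (S + b + a) for b ∈ S. Fix k ≥ 0 and b ∈ S with b - k•a ∈ S. Then for every x ∈ L_{k•a}, the set {x + m•a : m ∈ ℕ} ∩ L_b is a singleton. -/

import Mathlib

theorem stmt_8 (d r : ℕ) (S : AddSubmonoid (Fin d → ℤ)) (e : Fin r → (Fin d → ℤ))
    (hgen : S = AddSubmonoid.closure (Set.range e))
    (hgrp : ∀ x : Fin d → ℤ, ∃ s ∈ S, ∃ t ∈ S, x = s - t)
    (hne : (S : Set (Fin d → ℤ)) ≠ Set.univ)
    (a : Fin d → ℤ) (ha : a = ∑ i, e i)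
    (Lz : (Fin d → ℤ) → Set (Fin d → ℤ))
    (hLz : ∀ z : Fin d → ℤ, Lz z =
      ((fun s => s + z) '' (S : Set (Fin d → ℤ)) \
        (fun s => s + z + a) '' (S : Set (Fin d → ℤ))) ∩ (S : Set (Fin d → ℤ)))
    (k : ℕ) (b : Fin d → ℤ) (hb : b ∈ S) (hbk : b - k • a ∈ S) :
    ∀ x ∈ Lz (k • a), ∃! y : Fin d → ℤ, (∃ m : ℕ, y = x + m • a) ∧ y ∈ Lz b := by
  have haS : a ∈ S := by
    rw [ha, hgen]
    exact sum_mem fun i _ => AddSubmonoid.subset_closure ⟨i, rfl⟩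
  -- every element of S is dominated by a multiple of a
  have hdom : ∀ t ∈ S, ∃ m : ℕ, m • a - t ∈ S := by
    intro t ht
    rw [hgen] at ht
    refine AddSubmonoid.closure_induction ?_ ?_ ?_ ht
    · rintro x ⟨i, rfl⟩
      refine ⟨1, ?_⟩
      have : (1 : ℕ) • a - e i = ∑ j ∈ Finset.univ.erase i, e j := by
        rw [one_smul, ha, ← Finset.sum_erase_add Finset.univ e (Finset.mem_univ i)]
        abel
      rw [this, hgen]
      exact sum_mem fun j _ => AddSubmonoid.subset_closure ⟨j, rfl⟩
    · exact ⟨0, by simpa using S.zero_mem⟩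
    · rintro x y hx hy ⟨m1, h1⟩ ⟨m2, h2⟩
      refine ⟨m1 + m2, ?_⟩
      have : (m1 + m2) • a - (x + y) = (m1 • a - x) + (m2 • a - y) := by
        rw [add_smul]; abel
      rw [this]
      exact add_mem h1 h2
  intro x hx
  rw [hLz] at hx
  obtain ⟨⟨⟨s, hs, hsx⟩, hx2⟩, hxS⟩ := hx
  -- the set of m with x + m•a - b ∈ S is nonempty
  have hT : ∃ m : ℕ, x + m • a - b ∈ S := by
    obtain ⟨m, hm⟩ := hdom (b - k • a) hbk
    refine ⟨m, ?_⟩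
    have : x + m • a - b = s + (m • a - (b - k • a)) := by
      rw [← hsx]; dsimp only; abel
    rw [this]
    exact add_mem hs hm
  classical
  set m₀ := Nat.find hT with hm₀def
  have hm₀ : x + m₀ • a - b ∈ S := Nat.find_spec hT
  -- upward closedness
  have hup : ∀ n p : ℕ, x + n • a - b ∈ S → x + (n + p) • a - b ∈ S := by
    intro n p h
    have : x + (n + p) • a - b = (x + n • a - b) + p • a := by
      rw [add_smul]; abel
    rw [this]
    exact add_mem h (AddSubmonoid.nsmul_mem S haS p)
  have hmem : x + m₀ • a ∈ Lz b := by
    rw [hLz]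
    refine ⟨⟨⟨x + m₀ • a - b, hm₀, by simp⟩, ?_⟩, ?_⟩
    · rintro ⟨u, hu, hequ⟩
      simp only at hequ
      match hm : m₀ with
      | 0 =>
        -- u = x - b - a ∈ S, so x - a - k•a ∈ S, contradicting hx2
        apply hx2
        refine ⟨u + (b - k • a), add_mem hu hbk, ?_⟩
        simp only
        have : u = x - b - a := by
          rw [zero_smul] at hequ
          linear_combination (norm := abel) hequ
        rw [this]; abel
      | n + 1 =>
        have hun : u = x + n • a - b := by
          rw [succ_nsmul] at hequ
          linear_combination (norm := abel) hequ
        have : ¬ (x + n • a - b ∈ S) := by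
          have := Nat.find_min hT (by omega : n < m₀)
          simpa using this
        exact this (hun ▸ hu)
    · exact add_mem hxS (AddSubmonoid.nsmul_mem S haS m₀)
  refine ⟨x + m₀ • a, ⟨⟨m₀, rfl⟩, hmem⟩, ?_⟩
  rintro y ⟨⟨m, rfl⟩, hy⟩
  rw [hLz] at hy
  obtain ⟨⟨⟨u, hu, hequ⟩, hy2⟩, hyS⟩ := hy
  simp only at hequ
  have hmT : x + m • a - b ∈ S := by
    have : u = x + m • a - b := by linear_combination (norm := abel) hequ
    exact this ▸ hu
  have hle : m₀ ≤ m := Nat.find_min' hT hmT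
  rcases eq_or_lt_of_le hle with heq | hlt
  · rw [heq]
  · exfalso
    apply hy2
    have h1 : 1 ≤ m := by omega
    refine ⟨x + (m - 1) • a - b, ?_, ?_⟩
    · have : m - 1 = m₀ + (m - 1 - m₀) := by omega
      rw [this]
      exact hup m₀ _ hm₀
    · simp only
      have : m = (m - 1) + 1 := by omega
      conv_rhs => rw [this, succ_nsmul]
      abel
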